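/- Let s, t ∈ (0, π) with s ≠ t, and define f(u) = (sin(t+u))^{-1/2} + (sin(s+u))^{-1/2} on the set D = {u ∈ ℝ : sin(t+u) > 0 and sin(s+u) > 0}. Let u₀ = π/2 − (s+t)/2. Then u₀ ∈ D and f(u) ≥ f(u₀) for every u ∈ D; that is, f attains its minimum on D at u₀, the rotation angle that makes the chord joining the points (cos t, sin t) and (cos s, sin s) horizontal. -/
import Mathlib


open Real

lemma sin_add_sin' (x y : ℝ) :
    Real.sin x + Real.sin y = 2 * Real.sin ((x + y) / 2) * Real.cos ((x - y) / 2) := by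
  have h1 := Real.sin_add ((x + y) / 2) ((x - y) / 2)
  have h2 := Real.sin_sub ((x + y) / 2) ((x - y) / 2)
  rw [show (x + y) / 2 + (x - y) / 2 = x by ring] at h1
  rw [show (x + y) / 2 - (x - y) / 2 = y by ring] at h2
  rw [h1, h2]
  ring

lemma key_ineq (a b c : ℝ) (ha : 0 < a) (hb : 0 < b) (hc : 0 < c)
    (hab : a + b ≤ 2 * c) : 2 * (Real.sqrt c)⁻¹ ≤ (Real.sqrt a)⁻¹ + (Real.sqrt b)⁻¹ := by
  set A := Real.sqrt a with hA
  set B := Real.sqrt b with hB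
  set D := Real.sqrt c with hD
  have hA0 : 0 < A := Real.sqrt_pos.mpr ha
  have hB0 : 0 < B := Real.sqrt_pos.mpr hb
  have hD0 : 0 < D := Real.sqrt_pos.mpr hc
  have hA2 : A ^ 2 = a := Real.sq_sqrt ha.le
  have hB2 : B ^ 2 = b := Real.sq_sqrt hb.le
  have hD2 : D ^ 2 = c := Real.sq_sqrt hc.le
  have hsum : A ^ 2 + B ^ 2 ≤ 2 * D ^ 2 := by rw [hA2, hB2, hD2]; exact hab
  have hABle : A + B ≤ 2 * D := by nlinarith [sq_nonneg (A - B), sq_nonneg (A + B - 2 * D)]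
  have h1 : 2 * D⁻¹ = 2 / D := by field_simp
  have h2 : A⁻¹ + B⁻¹ = (A + B) / (A * B) := by field_simp; ring
  rw [h1, h2, div_le_div_iff₀ hD0 (by positivity)]
  nlinarith [sq_nonneg (A - B), mul_pos hA0 hB0]

theorem rotation_min_of_inv_sqrt_sin
    (s t : ℝ) (hs : s ∈ Set.Ioo 0 π) (ht : t ∈ Set.Ioo 0 π) (hst : s ≠ t) :
    (π / 2 - (s + t) / 2) ∈ {u : ℝ | 0 < Real.sin (t + u) ∧ 0 < Real.sin (s + u)} ∧
    ∀ u ∈ {u : ℝ | 0 < Real.sin (t + u) ∧ 0 < Real.sin (s + u)},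
      (Real.sqrt (Real.sin (t + (π / 2 - (s + t) / 2))))⁻¹ +
        (Real.sqrt (Real.sin (s + (π / 2 - (s + t) / 2))))⁻¹ ≤
      (Real.sqrt (Real.sin (t + u)))⁻¹ + (Real.sqrt (Real.sin (s + u)))⁻¹ := by
  obtain ⟨hs0, hsπ⟩ := hs
  obtain ⟨ht0, htπ⟩ := ht
  have hc : 0 < Real.cos ((s - t) / 2) := by
    apply Real.cos_pos_of_mem_Ioo
    constructor <;> [linarith; linarith]
  have e1 : t + (π / 2 - (s + t) / 2) = π / 2 - (s - t) / 2 := by ring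
  have e2 : s + (π / 2 - (s + t) / 2) = π / 2 - (t - s) / 2 := by ring
  have v1 : Real.sin (t + (π / 2 - (s + t) / 2)) = Real.cos ((s - t) / 2) := by
    rw [e1, Real.sin_pi_div_two_sub]
  have v2 : Real.sin (s + (π / 2 - (s + t) / 2)) = Real.cos ((s - t) / 2) := by
    rw [e2, Real.sin_pi_div_two_sub, show (t - s) / 2 = -((s - t) / 2) by ring, Real.cos_neg]
  constructor
  · exact ⟨by rw [v1]; exact hc, by rw [v2]; exact hc⟩
  · intro u hu
    obtain ⟨h1, h2⟩ := hu
    rw [v1, v2]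
    have hsum : Real.sin (t + u) + Real.sin (s + u) ≤ 2 * Real.cos ((s - t) / 2) := by
      rw [sin_add_sin' (t + u) (s + u)]
      have : Real.cos ((t + u - (s + u)) / 2) = Real.cos ((s - t) / 2) := by
        rw [show (t + u - (s + u)) / 2 = -((s - t) / 2) by ring, Real.cos_neg]
      rw [this]
      have := Real.sin_le_one ((t + u + (s + u)) / 2)
      nlinarith
    have := key_ineq (Real.sin (t + u)) (Real.sin (s + u)) (Real.cos ((s - t) / 2)) h1 h2 hc hsum
    linarith
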